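/- Let G = (V, E) be a simple connected graph with |G| ≥ 5 that can be constructed from a path P: v_1 v_2 v_3 by adding one vertex at a time so that each newly added vertex v_m (m ≥ 4) is adjacent in G to at most two of the prior vertices v_1, …, v_{m−1}. Then the complement Ḡ has an orthogonal representation by pairwise linearly independent vectors in ℝ^5. -/

import Mathlib

open Matrix

/-- `G` on `n ≥ 5` vertices is constructed, with respect to the vertex ordering
`v 0, v 1, …, v (n-1)`, from the path `v 0 - v 1 - v 2` by adding one vertex at a
time so that each newly added vertex `v i` (for `i ≥ 3`, i.e. `m = i + 1 ≥ 4`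
one-indexed) is adjacent in `G` to at most two of the prior vertices. -/
def ConstructedFromPathOrder {n : ℕ} (hn : 5 ≤ n) (G : SimpleGraph (Fin n))
    [DecidableRel G.Adj] (v : Equiv.Perm (Fin n)) : Prop :=
  G.Adj (v ⟨0, by omega⟩) (v ⟨1, by omega⟩) ∧
  G.Adj (v ⟨1, by omega⟩) (v ⟨2, by omega⟩) ∧
  ∀ i : Fin n, 3 ≤ (i : ℕ) →
    (Finset.univ.filter (fun j : Fin n => j < i ∧ G.Adj (v i) (v j))).card ≤ 2

section Aux
open Submodule Module RealInnerProductSpace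

private lemma avoid_subspaces {ι : Type*} [Finite ι] {K V : Type*} [Field K] [Infinite K]
    [AddCommGroup V] [Module K V] (W : Submodule K V) (U : ι → Submodule K V)
    (h : ∀ i, ¬ W ≤ U i) : ∃ x ∈ W, ∀ i, x ∉ U i := by
  by_contra hc
  push_neg at hc
  have hcov : ⋃ i, (((U i).comap W.subtype : Submodule K W) : Set W) = Set.univ := by
    ext y
    simp only [Set.mem_iUnion, Set.mem_univ, iff_true, SetLike.mem_coe,
      Submodule.mem_comap, Submodule.subtype_apply]
    exact hc y y.2
  obtain ⟨i, hi⟩ := Subspace.exists_eq_top_of_iUnion_eq_univ hcov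
  refine h i fun x hx => ?_
  have : (⟨x, hx⟩ : W) ∈ (U i).comap W.subtype := hi ▸ Submodule.mem_top
  exact this

private lemma key_construction {n : ℕ} (hn : 5 ≤ n) (A : Fin n → Fin n → Prop)
    [DecidableRel A] (hsymm : ∀ i j, A i j → A j i)
    (h01 : A ⟨0, by omega⟩ ⟨1, by omega⟩) (h12 : A ⟨1, by omega⟩ ⟨2, by omega⟩)
    (h3 : ∀ i : Fin n, 3 ≤ (i : ℕ) →
      (Finset.univ.filter (fun j : Fin n => j < i ∧ A i j)).card ≤ 2) :
    ∃ g : Fin n → EuclideanSpace ℝ (Fin 5),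
      (∀ i j : Fin n, i ≠ j → (⟪g i, g j⟫ = 0 ↔ A i j)) ∧
      (∀ i : Fin n, g i ≠ 0) ∧
      (∀ i j : Fin n, i ≠ j → g i ∉ span ℝ {g j}) := by
  have main : ∀ k : ℕ, 3 ≤ k → k ≤ n → ∃ g : Fin n → EuclideanSpace ℝ (Fin 5),
      (∀ i j : Fin n, (i : ℕ) < k → (j : ℕ) < k → i ≠ j → (⟪g i, g j⟫ = 0 ↔ A i j)) ∧
      (∀ i : Fin n, (i : ℕ) < k → g i ≠ 0) ∧
      (∀ i j : Fin n, (i : ℕ) < k → (j : ℕ) < k → i ≠ j → g i ∉ span ℝ {g j}) ∧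
      (∀ i j l : Fin n, (i : ℕ) < k → (j : ℕ) < k → (l : ℕ) < k → i ≠ j → i ≠ l → j ≠ l →
        g i ∉ span ℝ {g j, g l}) := by
    intro k hk3
    induction k, hk3 using Nat.le_induction with
    | base =>
      intro _
      -- base case: three explicit vectors
      set t : ℝ := if A ⟨0, by omega⟩ ⟨2, by omega⟩ then 0 else 1 with ht
      set a : EuclideanSpace ℝ (Fin 5) := EuclideanSpace.single 0 1 with ha
      set b : EuclideanSpace ℝ (Fin 5) := EuclideanSpace.single 1 1 with hb
      set c : EuclideanSpace ℝ (Fin 5) :=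
        EuclideanSpace.single 2 1 + t • EuclideanSpace.single 0 1 with hc
      -- nonzero facts
      have ha0 : a ≠ 0 := by
        intro h; have := congrArg (fun v => v 0) h; simp [ha, EuclideanSpace.single_apply] at this
      have hb0 : b ≠ 0 := by
        intro h; have := congrArg (fun v => v 1) h; simp [hb, EuclideanSpace.single_apply] at this
      have hc0 : c ≠ 0 := by
        intro h; have := congrArg (fun v => v 2) h; simp [hc, EuclideanSpace.single_apply] at this
      -- span facts
      have sab : a ∉ span ℝ {b} := by
        intro h; rw [mem_span_singleton] at h; obtain ⟨s, h⟩ := h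
        have := congrArg (fun v => v 0) h; simp [ha, hb, EuclideanSpace.single_apply] at this
      have sac : a ∉ span ℝ {c} := by
        intro h; rw [mem_span_singleton] at h; obtain ⟨s, h⟩ := h
        have h2 := congrArg (fun v => v 2) h; have h0 := congrArg (fun v => v 0) h
        simp [ha, hc, EuclideanSpace.single_apply] at h2 h0
        rw [h2] at h0; simp at h0
      have sba : b ∉ span ℝ {a} := by
        intro h; rw [mem_span_singleton] at h; obtain ⟨s, h⟩ := h
        have := congrArg (fun v => v 1) h; simp [ha, hb, EuclideanSpace.single_apply] at this
      have sbc : b ∉ span ℝ {c} := by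
        intro h; rw [mem_span_singleton] at h; obtain ⟨s, h⟩ := h
        have := congrArg (fun v => v 1) h; simp [hb, hc, EuclideanSpace.single_apply] at this
      have sca : c ∉ span ℝ {a} := by
        intro h; rw [mem_span_singleton] at h; obtain ⟨s, h⟩ := h
        have := congrArg (fun v => v 2) h; simp [ha, hc, EuclideanSpace.single_apply] at this
      have scb : c ∉ span ℝ {b} := by
        intro h; rw [mem_span_singleton] at h; obtain ⟨s, h⟩ := h
        have := congrArg (fun v => v 2) h; simp [hb, hc, EuclideanSpace.single_apply] at this
      have sabc : a ∉ span ℝ {b, c} := by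
        intro h; rw [Submodule.mem_span_pair] at h; obtain ⟨s, r, h⟩ := h
        have h2 := congrArg (fun v => v 2) h; have h0 := congrArg (fun v => v 0) h
        simp [ha, hb, hc, EuclideanSpace.single_apply] at h2 h0
        rw [h2] at h0; simp at h0
      have sbac : b ∉ span ℝ {a, c} := by
        intro h; rw [Submodule.mem_span_pair] at h; obtain ⟨s, r, h⟩ := h
        have := congrArg (fun v => v 1) h; simp [ha, hb, hc, EuclideanSpace.single_apply] at this
      have scab : c ∉ span ℝ {a, b} := by
        intro h; rw [Submodule.mem_span_pair] at h; obtain ⟨s, r, h⟩ := h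
        have := congrArg (fun v => v 2) h; simp [ha, hb, hc, EuclideanSpace.single_apply] at this
      -- inner product facts
      have iab : ⟪a, b⟫ = 0 := by
        simp [ha, hb, EuclideanSpace.inner_single_left, EuclideanSpace.single_apply]
      have ibc : ⟪b, c⟫ = 0 := by
        simp [hb, hc, EuclideanSpace.inner_single_left, EuclideanSpace.single_apply]
      have iac : ⟪a, c⟫ = t := by
        simp [ha, hc, EuclideanSpace.inner_single_left, EuclideanSpace.single_apply]
      set gb : Fin n → EuclideanSpace ℝ (Fin 5) :=
        fun i => if (i : ℕ) = 0 then a else if (i : ℕ) = 1 then b else c with hgb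
      have hv0 : ∀ i : Fin n, (i : ℕ) = 0 → gb i = a := fun i h => by simp [hgb, h]
      have hv1 : ∀ i : Fin n, (i : ℕ) = 1 → gb i = b := fun i h => by simp [hgb, h]
      have hv2 : ∀ i : Fin n, (i : ℕ) = 2 → gb i = c := fun i h => by simp [hgb, h]
      refine ⟨gb, ?_, ?_, ?_, ?_⟩
      · intro i j hi hj hij
        have hvij : (i : ℕ) ≠ (j : ℕ) := fun h => hij (Fin.ext h)
        rcases (show (i : ℕ) = 0 ∨ (i : ℕ) = 1 ∨ (i : ℕ) = 2 by omega) with h1 | h1 | h1 <;>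
          rcases (show (j : ℕ) = 0 ∨ (j : ℕ) = 1 ∨ (j : ℕ) = 2 by omega) with h2 | h2 | h2
        · exfalso; omega
        · obtain rfl : i = ⟨0, Nat.lt_of_lt_of_le (by norm_num) hn⟩ := Fin.ext h1
          obtain rfl : j = ⟨1, Nat.lt_of_lt_of_le (by norm_num) hn⟩ := Fin.ext h2
          rw [hv0 _ rfl, hv1 _ rfl]
          exact iff_of_true iab h01
        · obtain rfl : i = ⟨0, Nat.lt_of_lt_of_le (by norm_num) hn⟩ := Fin.ext h1
          obtain rfl : j = ⟨2, Nat.lt_of_lt_of_le (by norm_num) hn⟩ := Fin.ext h2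
          rw [hv0 _ rfl, hv2 _ rfl, iac, ht]
          split_ifs with hA
          · exact iff_of_true rfl hA
          · exact iff_of_false (by norm_num) hA
        · obtain rfl : i = ⟨1, Nat.lt_of_lt_of_le (by norm_num) hn⟩ := Fin.ext h1
          obtain rfl : j = ⟨0, Nat.lt_of_lt_of_le (by norm_num) hn⟩ := Fin.ext h2
          rw [hv1 _ rfl, hv0 _ rfl, real_inner_comm]
          exact iff_of_true iab (hsymm _ _ h01)
        · exfalso; omega
        · obtain rfl : i = ⟨1, Nat.lt_of_lt_of_le (by norm_num) hn⟩ := Fin.ext h1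
          obtain rfl : j = ⟨2, Nat.lt_of_lt_of_le (by norm_num) hn⟩ := Fin.ext h2
          rw [hv1 _ rfl, hv2 _ rfl]
          exact iff_of_true ibc h12
        · obtain rfl : i = ⟨2, Nat.lt_of_lt_of_le (by norm_num) hn⟩ := Fin.ext h1
          obtain rfl : j = ⟨0, Nat.lt_of_lt_of_le (by norm_num) hn⟩ := Fin.ext h2
          rw [hv2 _ rfl, hv0 _ rfl, real_inner_comm, iac, ht]
          split_ifs with hA
          · exact iff_of_true rfl (hsymm _ _ hA)
          · exact iff_of_false (by norm_num) (fun h => hA (hsymm _ _ h))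
        · obtain rfl : i = ⟨2, Nat.lt_of_lt_of_le (by norm_num) hn⟩ := Fin.ext h1
          obtain rfl : j = ⟨1, Nat.lt_of_lt_of_le (by norm_num) hn⟩ := Fin.ext h2
          rw [hv2 _ rfl, hv1 _ rfl, real_inner_comm]
          exact iff_of_true ibc (hsymm _ _ h12)
        · exfalso; omega
      · intro i hi
        rcases (show (i : ℕ) = 0 ∨ (i : ℕ) = 1 ∨ (i : ℕ) = 2 by omega) with h1 | h1 | h1
        · rw [hv0 i h1]; exact ha0
        · rw [hv1 i h1]; exact hb0
        · rw [hv2 i h1]; exact hc0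
      · intro i j hi hj hij
        have hvij : (i : ℕ) ≠ (j : ℕ) := fun h => hij (Fin.ext h)
        rcases (show (i : ℕ) = 0 ∨ (i : ℕ) = 1 ∨ (i : ℕ) = 2 by omega) with h1 | h1 | h1 <;>
          rcases (show (j : ℕ) = 0 ∨ (j : ℕ) = 1 ∨ (j : ℕ) = 2 by omega) with h2 | h2 | h2 <;>
          first
          | (exfalso; omega)
          | (rw [hv0 i h1, hv1 j h2]; exact sab)
          | (rw [hv0 i h1, hv2 j h2]; exact sac)
          | (rw [hv1 i h1, hv0 j h2]; exact sba)
          | (rw [hv1 i h1, hv2 j h2]; exact sbc)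
          | (rw [hv2 i h1, hv0 j h2]; exact sca)
          | (rw [hv2 i h1, hv1 j h2]; exact scb)
      · intro i j l hi hj hl hij hil hjl
        have hvij : (i : ℕ) ≠ (j : ℕ) := fun h => hij (Fin.ext h)
        have hvil : (i : ℕ) ≠ (l : ℕ) := fun h => hil (Fin.ext h)
        have hvjl : (j : ℕ) ≠ (l : ℕ) := fun h => hjl (Fin.ext h)
        rcases (show (i : ℕ) = 0 ∨ (i : ℕ) = 1 ∨ (i : ℕ) = 2 by omega) with h1 | h1 | h1 <;>
          rcases (show (j : ℕ) = 0 ∨ (j : ℕ) = 1 ∨ (j : ℕ) = 2 by omega) with h2 | h2 | h2 <;>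
          rcases (show (l : ℕ) = 0 ∨ (l : ℕ) = 1 ∨ (l : ℕ) = 2 by omega) with h3 | h3 | h3 <;>
          first
          | (exfalso; omega)
          | (rw [hv0 i h1, hv1 j h2, hv2 l h3]; exact sabc)
          | (rw [hv0 i h1, hv2 j h2, hv1 l h3, Set.pair_comm]; exact sabc)
          | (rw [hv1 i h1, hv0 j h2, hv2 l h3]; exact sbac)
          | (rw [hv1 i h1, hv2 j h2, hv0 l h3, Set.pair_comm]; exact sbac)
          | (rw [hv2 i h1, hv0 j h2, hv1 l h3]; exact scab)
          | (rw [hv2 i h1, hv1 j h2, hv0 l h3, Set.pair_comm]; exact scab)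
    | succ k hk3 IH =>
      intro hkn
      classical
      obtain ⟨g, Hinner, H0, H1, H2⟩ := IH (by omega)
      have E_def : True := trivial
      set ik : Fin n := ⟨k, by omega⟩ with hik
      set S : Finset (Fin n) := Finset.univ.filter (fun j => j < ik ∧ A ik j) with hS
      have hSmem : ∀ j : Fin n, j ∈ S ↔ (j < ik ∧ A ik j) := by
        intro j; simp [hS]
      have hScard : S.card ≤ 2 := h3 ik (by simp only [hik]; omega)
      set T : Submodule ℝ (EuclideanSpace ℝ (Fin 5)) := span ℝ (↑(S.image g) : Set (EuclideanSpace ℝ (Fin 5))) with hT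
      have hTrank : finrank ℝ T ≤ 2 :=
        le_trans (finrank_span_finset_le_card _) (le_trans Finset.card_image_le hScard)
      have hWrank : 3 ≤ finrank ℝ (Tᗮ : Submodule ℝ (EuclideanSpace ℝ (Fin 5))) := by
        have := Submodule.finrank_add_finrank_orthogonal T
        rw [finrank_euclideanSpace_fin] at this
        omega
      have hTj : ∀ j : Fin n, (j : ℕ) < k → j ∉ S → g j ∉ T := by
        intro j hj hjS
        rcases Nat.lt_or_ge S.card 1 with h | h
        · have : S = ∅ := Finset.card_eq_zero.mp (by omega)
          rw [hT, this]
          simp only [Finset.image_empty, Finset.coe_empty, span_empty, Submodule.mem_bot]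
          exact H0 j hj
        rcases Nat.lt_or_ge S.card 2 with h' | h'
        · have hcard1 : S.card = 1 := by omega
          obtain ⟨i, hi⟩ := Finset.card_eq_one.mp hcard1
          have hiS : i ∈ S := by rw [hi]; exact Finset.mem_singleton_self i
          have hik' : (i : ℕ) < k := (hSmem i).mp hiS |>.1
          rw [hT, hi]
          simp only [Finset.image_singleton, Finset.coe_singleton]
          exact H1 j i hj hik' (by rintro rfl; exact hjS hiS)
        · obtain ⟨i, l, hil, hil2⟩ := Finset.card_eq_two.mp (le_antisymm hScard h')
          have hiS : i ∈ S := by rw [hil2]; simp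
          have hlS : l ∈ S := by rw [hil2]; simp
          rw [hT, hil2]
          have : (↑(({i, l} : Finset (Fin n)).image g) : Set (EuclideanSpace ℝ (Fin 5))) = {g i, g l} := by
            simp
          rw [this]
          exact H2 j i l hj ((hSmem i).mp hiS).1 ((hSmem l).mp hlS).1
            (by rintro rfl; exact hjS hiS) (by rintro rfl; exact hjS hlS) hil
      -- the family of subspaces to avoid
      set U : (Fin n ⊕ Fin n × Fin n) → Submodule ℝ (EuclideanSpace ℝ (Fin 5)) :=
        Sum.elim
          (fun j => if (j : ℕ) < k ∧ j ∉ S then (span ℝ {g j})ᗮ else ⊥)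
          (fun p => if (p.1 : ℕ) < k ∧ (p.2 : ℕ) < k then span ℝ {g p.1, g p.2} else ⊥)
        with hU
      have hbot : ¬ (Tᗮ : Submodule ℝ (EuclideanSpace ℝ (Fin 5))) ≤ ⊥ := by
        intro hle
        have := Submodule.finrank_mono hle
        rw [finrank_bot] at this
        omega
      have hUavoid : ∀ p, ¬ (Tᗮ : Submodule ℝ (EuclideanSpace ℝ (Fin 5))) ≤ U p := by
        rintro (j | ⟨i, l⟩)
        · simp only [hU, Sum.elim_inl]
          split_ifs with hcond
          · intro hle
            have h2 : ((span ℝ {g j})ᗮᗮ : Submodule ℝ (EuclideanSpace ℝ (Fin 5))) ≤ Tᗮᗮ :=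
              Submodule.orthogonal_le hle
            rw [Submodule.orthogonal_orthogonal, Submodule.orthogonal_orthogonal] at h2
            exact hTj j hcond.1 hcond.2 (h2 (mem_span_singleton_self _))
          · exact hbot
        · simp only [hU, Sum.elim_inr]
          split_ifs with hcond
          · intro hle
            have hle2 : finrank ℝ (span ℝ {g i, g l} : Submodule ℝ (EuclideanSpace ℝ (Fin 5))) ≤ 2 := by
              have heq : ({g i, g l} : Set (EuclideanSpace ℝ (Fin 5))) = (↑({g i, g l} : Finset (EuclideanSpace ℝ (Fin 5))) : Set (EuclideanSpace ℝ (Fin 5))) := by simp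
              rw [heq]
              refine le_trans (finrank_span_finset_le_card _) ?_
              exact le_trans (Finset.card_insert_le _ _) (by simp)
            have := Submodule.finrank_mono hle
            omega
          · exact hbot
      obtain ⟨x, hxW, hxU⟩ := avoid_subspaces _ U hUavoid
      have hx2 : ∀ i l : Fin n, (i : ℕ) < k → (l : ℕ) < k → x ∉ span ℝ {g i, g l} := by
        intro i l hi hl
        have := hxU (Sum.inr (i, l))
        simpa only [hU, Sum.elim_inr, if_pos (⟨hi, hl⟩ : (i : ℕ) < k ∧ (l : ℕ) < k)] using this
      have hx1 : ∀ i : Fin n, (i : ℕ) < k → x ∉ span ℝ {g i} := by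
        intro i hi hmem
        exact hx2 i i hi hi (by rwa [Set.pair_eq_singleton])
      have hx0 : x ≠ 0 := by
        rintro rfl
        exact hx1 ⟨0, by omega⟩ (by simp; omega) (zero_mem _)
      have hxS : ∀ j ∈ S, ⟪g j, x⟫ = 0 := by
        intro j hj
        exact (Submodule.mem_orthogonal T x).mp hxW (g j)
          (subset_span (by simp only [Finset.coe_image, Set.mem_image]; exact ⟨j, hj, rfl⟩))
      have hxNS : ∀ j : Fin n, (j : ℕ) < k → j ∉ S → ⟪g j, x⟫ ≠ 0 := by
        intro j hj hjS h0
        refine hxU (Sum.inl j) ?_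
        simp only [hU, Sum.elim_inl, if_pos (⟨hj, hjS⟩ : (j : ℕ) < k ∧ j ∉ S)]
        rw [Submodule.mem_orthogonal]
        intro u hu
        rw [mem_span_singleton] at hu
        obtain ⟨r, rfl⟩ := hu
        rw [real_inner_smul_left, h0, mul_zero]
      -- the updated assignment
      set g' : Fin n → EuclideanSpace ℝ (Fin 5) := Function.update g ik x with hg'
      have hgold : ∀ i : Fin n, (i : ℕ) < k → g' i = g i := by
        intro i hi
        exact Function.update_of_ne (by rw [Fin.ne_iff_vne]; simp [hik]; omega) _ _
      have hgnew : g' ik = x := Function.update_self _ _ _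
      have hsplit : ∀ i : Fin n, (i : ℕ) < k + 1 → (i : ℕ) < k ∨ i = ik := by
        intro i hi
        rcases Nat.lt_or_ge (i : ℕ) k with h | h
        · exact Or.inl h
        · exact Or.inr (Fin.ext (by simp [hik]; omega))
      -- key lemma for triples involving x in second position
      have key3 : ∀ i l : Fin n, (i : ℕ) < k → (l : ℕ) < k → i ≠ l →
          g i ∉ span ℝ {x, g l} := by
        intro i l hi hl hil h
        rw [Submodule.mem_span_pair] at h
        obtain ⟨s, r, h⟩ := h
        by_cases hs : s = 0
        · subst hs
          rw [zero_smul, zero_add] at h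
          exact H1 i l hi hl hil (mem_span_singleton.mpr ⟨r, h⟩)
        · refine hx2 i l hi hl (Submodule.mem_span_pair.mpr ⟨s⁻¹, -(s⁻¹ * r), ?_⟩)
          have hx' : s • x = g i - r • g l := by rw [← h]; abel
          have hx'' : x = s⁻¹ • (g i - r • g l) := by
            rw [← hx', smul_smul, inv_mul_cancel₀ hs, one_smul]
          rw [hx'']; module
      refine ⟨g', ?_, ?_, ?_, ?_⟩
      · -- inner products
        intro i j hi hj hij
        have hAsym : ∀ p q : Fin n, (q : ℕ) < k → (⟪x, g q⟫ = 0 ↔ A ik q) := by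
          intro p q hq
          rw [real_inner_comm]
          by_cases hqS : q ∈ S
          · simp only [hxS q hqS, true_iff]
            · exact ((hSmem q).mp hqS).2
          · have hnA : ¬ A ik q := fun hA => hqS ((hSmem q).mpr ⟨by
              rw [Fin.lt_iff_val_lt_val]; simp [hik]; omega, hA⟩)
            simp only [hxNS q hq hqS, hnA]
        rcases hsplit i hi with hi' | rfl
        · rcases hsplit j hj with hj' | rfl
          · rw [hgold i hi', hgold j hj']
            exact Hinner i j hi' hj' hij
          · rw [hgold i hi', hgnew, real_inner_comm]
            constructor
            · intro h; exact hsymm _ _ ((hAsym ik i hi').mp h)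
            · intro h; exact (hAsym ik i hi').mpr (hsymm _ _ h)
        · rcases hsplit j hj with hj' | rfl
          · rw [hgnew, hgold j hj']
            exact hAsym ik j hj'
          · exact absurd rfl hij
      · -- nonzero
        intro i hi
        rcases hsplit i hi with hi' | rfl
        · rw [hgold i hi']; exact H0 i hi'
        · rw [hgnew]; exact hx0
      · -- pairs
        intro i j hi hj hij
        rcases hsplit i hi with hi' | rfl
        · rcases hsplit j hj with hj' | rfl
          · rw [hgold i hi', hgold j hj']; exact H1 i j hi' hj' hij
          · rw [hgold i hi', hgnew]
            intro h
            rw [mem_span_singleton] at h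
            obtain ⟨r, hr⟩ := h
            have hr0 : r ≠ 0 := by
              rintro rfl
              rw [zero_smul] at hr
              exact H0 i hi' hr.symm
            refine hx1 i hi' (mem_span_singleton.mpr ⟨r⁻¹, ?_⟩)
            rw [← hr, smul_smul, inv_mul_cancel₀ hr0, one_smul]
        · rcases hsplit j hj with hj' | rfl
          · rw [hgnew, hgold j hj']; exact hx1 j hj'
          · exact absurd rfl hij
      · -- triples
        intro i j l hi hj hl hij hil hjl
        rcases hsplit i hi with hi' | rfl
        · rcases hsplit j hj with hj' | rfl
          · rcases hsplit l hl with hl' | rfl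
            · rw [hgold i hi', hgold j hj', hgold l hl']
              exact H2 i j l hi' hj' hl' hij hil hjl
            · rw [hgold i hi', hgold j hj', hgnew, Set.pair_comm]
              exact key3 i j hi' hj' hij
          · rcases hsplit l hl with hl' | rfl
            · rw [hgold i hi', hgnew, hgold l hl']
              exact key3 i l hi' hl' hil
            · exact absurd rfl hjl
        · rcases hsplit j hj with hj' | rfl
          · rcases hsplit l hl with hl' | rfl
            · rw [hgnew, hgold j hj', hgold l hl']
              exact hx2 j l hj' hl'
            · exact absurd rfl hil
          · exact absurd rfl hij
  obtain ⟨g, Hinner, H0, H1, _⟩ := main n (by omega) le_rfl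
  exact ⟨g, fun i j hij => Hinner i j i.isLt j.isLt hij, fun i => H0 i i.isLt,
    fun i j hij => H1 i j i.isLt j.isLt hij⟩


/-- If a simple connected graph `G` with `|G| ≥ 5` can be constructed from a path
`v 1 v 2 v 3` by adding one vertex at a time, each adjacent to at most two prior
vertices, then the complement `Ḡ` has an orthogonal representation by pairwise
linearly independent vectors in `ℝ⁵`. -/
theorem complement_has_orthogonal_representation {n : ℕ} (hn : 5 ≤ n)
    (G : SimpleGraph (Fin n)) [DecidableRel G.Adj] (hconn : G.Connected)
    (hcon : ∃ v : Equiv.Perm (Fin n), ConstructedFromPathOrder hn G v) :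
    ∃ f : Fin n → (Fin 5 → ℝ),
      (∀ u w : Fin n, u ≠ w → (f u ⬝ᵥ f w ≠ 0 ↔ Gᶜ.Adj u w)) ∧
      (∀ u w : Fin n, u ≠ w → LinearIndependent ℝ ![f u, f w]) := by
  obtain ⟨v, h01, h12, h3⟩ := hcon
  obtain ⟨g, Hinner, H0, H1⟩ := key_construction hn (fun i j => G.Adj (v i) (v j))
    (fun i j h => h.symm) h01 h12 h3
  have hdot : ∀ x y : EuclideanSpace ℝ (Fin 5),
      (WithLp.equiv 2 (Fin 5 → ℝ)) x ⬝ᵥ (WithLp.equiv 2 (Fin 5 → ℝ)) y = ⟪x, y⟫ := by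
    intro x y
    simp [dotProduct, PiLp.inner_apply, RCLike.inner_apply, mul_comm]
  refine ⟨fun u => (WithLp.equiv 2 (Fin 5 → ℝ)) (g (v.symm u)), ?_, ?_⟩
  · intro u w huw
    have hne : v.symm u ≠ v.symm w := fun h => huw (v.symm.injective h)
    have hiff := Hinner _ _ hne
    rw [Equiv.apply_symm_apply, Equiv.apply_symm_apply] at hiff
    rw [hdot, SimpleGraph.compl_adj]
    constructor
    · intro h; exact ⟨huw, fun hA => h (hiff.mpr hA)⟩
    · intro h h0; exact h.2 (hiff.mp h0)
  · intro u w huw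
    have hne : v.symm u ≠ v.symm w := fun h => huw (v.symm.injective h)
    have li : LinearIndependent ℝ ![g (v.symm u), g (v.symm w)] := by
      rw [linearIndependent_fin2]
      constructor
      · simpa using H0 (v.symm w)
      · intro r hr
        simp only [Matrix.cons_val_one, Matrix.head_cons, Matrix.cons_val_zero] at hr
        exact H1 _ _ hne (mem_span_singleton.mpr ⟨r, hr⟩)
    have li2 := li.map' (WithLp.linearEquiv 2 ℝ (Fin 5 → ℝ)).toLinearMap
      (LinearEquiv.ker _)
    have heq : (⇑(WithLp.linearEquiv 2 ℝ (Fin 5 → ℝ)).toLinearMap ∘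
        ![g (v.symm u), g (v.symm w)]) =
        ![(WithLp.equiv 2 (Fin 5 → ℝ)) (g (v.symm u)),
          (WithLp.equiv 2 (Fin 5 → ℝ)) (g (v.symm w))] := by
      funext i; fin_cases i <;> rfl
    rw [heq] at li2
    exact li2

end Aux
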